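/- arXiv:1807.11134 — 3 statements merged into one kernel-verified Lean document; each statement's English description precedes it below -/
import Mathlib

section
/- Let $L$ be a Lie algebra over a field $F$, let $K$ be an ideal of $L$, and let $V$, $W$ be finite-dimensional irreducible $L$-modules such that $K$ acts non-trivially on $V$ and trivially on $W$. Then $K$ acts non-trivially on every composition factor of the $L$-module $V \otimes W$. -/
set_option maxHeartbeats 1000000

open scoped TensorProduct

attribute [local instance 100] LieRing.ofAssociativeRing

/-- An ideal `K` of `L` acts trivially on an `L`-module `V` if every element of `K` acts as
the zero map. -/
def LieIdealActsTrivially {F L : Type} [Field F] [LieRing L] [LieAlgebra F L]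
    (K : LieIdeal F L) (V : Type) [AddCommGroup V] [LieRingModule L V] : Prop :=
  ∀ x ∈ K, ∀ v : V, ⁅x, v⁆ = 0

section Auxiliary

variable {F : Type} [Field F]

/-- In a non-unital subalgebra, positive powers of members are members. -/
lemma aux_pow_succ_mem {B : Type} [Ring B] [Algebra F B]
    (S : NonUnitalSubalgebra F B) {x : B} (hx : x ∈ S) (n : ℕ) : x ^ (n + 1) ∈ S := by
  induction n with
  | zero => simpa using hx
  | succ n ih => rw [pow_succ]; exact mul_mem ih hx

/-- Evaluating a polynomial with zero constant term at a member of a non-unital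
subalgebra gives a member. -/
lemma aux_aeval_mem {B : Type} [Ring B] [Algebra F B]
    (S : NonUnitalSubalgebra F B) {x : B} (hx : x ∈ S) (p : Polynomial F)
    (hp : p.coeff 0 = 0) : Polynomial.aeval x p ∈ S := by
  have key : ∀ q : Polynomial F, Polynomial.aeval x q * x ∈ S := by
    intro q
    induction q using Polynomial.induction_on' with
    | add p q hp hq => rw [map_add, add_mul]; exact add_mem hp hq
    | monomial n c =>
      rw [Polynomial.aeval_monomial]
      have : (algebraMap F B) c * x ^ n * x = c • x ^ (n + 1) := by
        rw [← Algebra.smul_def, smul_mul_assoc, pow_succ]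
      rw [this]
      exact SMulMemClass.smul_mem c (aux_pow_succ_mem S hx n)
  have hfact : p = p.divX * Polynomial.X := by
    conv_lhs => rw [← Polynomial.divX_mul_X_add p]
    rw [hp, map_zero, add_zero]
  rw [hfact, map_mul, Polynomial.aeval_X]
  exact key p.divX

/-- Fitting-style lemma: a non-nilpotent endomorphism of a finite-dimensional space admits a
nonzero idempotent that is a polynomial in it with zero constant term. -/
lemma aux_fitting {V : Type} [AddCommGroup V] [Module F V] [FiniteDimensional F V]
    (x : Module.End F V) (hx : ¬ IsNilpotent x) :
    ∃ p : Polynomial F, p.coeff 0 = 0 ∧ IsIdempotentElem (Polynomial.aeval x p) ∧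
      Polynomial.aeval x p ≠ 0 := by
  have hint : IsIntegral F x := IsIntegral.of_finite F x
  have hm0 : minpoly F x ≠ 0 := minpoly.ne_zero hint
  set m := minpoly F x with hm
  set s := m.rootMultiplicity 0 with hs
  obtain ⟨q, hfact, hndvd⟩ := m.exists_eq_pow_rootMultiplicity_mul_and_not_dvd hm0 0
  rw [map_zero, sub_zero] at hfact hndvd
  rw [← hs] at hfact
  have hq0 : q.coeff 0 ≠ 0 := fun h => hndvd (Polynomial.X_dvd_iff.mpr h)
  -- coprimality of X^s and q
  have hcop : IsCoprime ((Polynomial.X : Polynomial F) ^ s) q := by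
    refine IsCoprime.pow_left ?_
    refine ⟨-(Polynomial.C (q.coeff 0)⁻¹) * q.divX, Polynomial.C (q.coeff 0)⁻¹, ?_⟩
    have e1 : q.divX * Polynomial.X + Polynomial.C (q.coeff 0) = q :=
      Polynomial.divX_mul_X_add q
    have h1 : Polynomial.C ((q.coeff 0)⁻¹) * Polynomial.C (q.coeff 0) = 1 := by
      rw [← Polynomial.C_mul, inv_mul_cancel₀ hq0, Polynomial.C_1]
    linear_combination (-(Polynomial.C (q.coeff 0)⁻¹)) * e1 + h1
  obtain ⟨u, w, huw⟩ := hcop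
  by_cases hs0 : s = 0
  · -- x is invertible-ish: m has nonzero constant term
    rw [hs0, pow_zero, one_mul] at hfact
    have hmc : m.coeff 0 ≠ 0 := by rw [hfact]; exact hq0
    refine ⟨Polynomial.C (m.coeff 0)⁻¹ * (Polynomial.C (m.coeff 0) - m), ?_, ?_, ?_⟩
    · simp [Polynomial.coeff_C_mul, Polynomial.coeff_sub, Polynomial.coeff_C]
    · have : Polynomial.aeval x (Polynomial.C (m.coeff 0)⁻¹ *
          (Polynomial.C (m.coeff 0) - m)) = 1 := by
        rw [map_mul, map_sub, Polynomial.aeval_C, Polynomial.aeval_C, hm, minpoly.aeval,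
          sub_zero, ← map_mul, inv_mul_cancel₀ hmc, map_one]
      rw [this]; exact IsIdempotentElem.one
    · have h1 : Polynomial.aeval x (Polynomial.C (m.coeff 0)⁻¹ *
          (Polynomial.C (m.coeff 0) - m)) = 1 := by
        rw [map_mul, map_sub, Polynomial.aeval_C, Polynomial.aeval_C, hm, minpoly.aeval,
          sub_zero, ← map_mul, inv_mul_cancel₀ hmc, map_one]
      rw [h1]
      -- 1 ≠ 0 in End F V since V is nontrivial
      haveI : Nontrivial V := by
        by_contra hcon
        rw [not_nontrivial_iff_subsingleton] at hcon
        exact hx (by rw [Subsingleton.elim x 0]; exact IsNilpotent.zero)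
      obtain ⟨v, hv⟩ := exists_ne (0 : V)
      intro h10
      apply hv
      have := congrArg (fun g : Module.End F V => g v) h10
      simpa using this
  · -- general case: p = u * X^s
    refine ⟨u * Polynomial.X ^ s, ?_, ?_, ?_⟩
    · exact Polynomial.X_dvd_iff.mp (Dvd.dvd.mul_left (dvd_pow_self Polynomial.X hs0) u)
    · have key : (u * Polynomial.X ^ s) * (u * Polynomial.X ^ s) - u * Polynomial.X ^ s
          = -(u * w * m) := by
        linear_combination (u * Polynomial.X ^ s) * huw + u * w * hfact
      have : Polynomial.aeval x ((u * Polynomial.X ^ s) * (u * Polynomial.X ^ s)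
          - u * Polynomial.X ^ s) = 0 := by
        rw [key, map_neg, map_mul, map_mul, hm, minpoly.aeval, mul_zero, neg_zero]
      rw [map_sub, sub_eq_zero, map_mul] at this
      exact this
    · intro haev
      have hdvd : m ∣ u * Polynomial.X ^ s := minpoly.dvd F x haev
      obtain ⟨k, hk⟩ := hdvd
      have hXs : (Polynomial.X : Polynomial F) ^ s ≠ 0 :=
        pow_ne_zero s Polynomial.X_ne_zero
      have hu : u = q * k := by
        apply mul_right_cancel₀ hXs
        rw [hk, hfact]; ring
      have hq1 : q * (k * Polynomial.X ^ s + w) = 1 := by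
        rw [← huw, hu]; ring
      have hqu : IsUnit q := IsUnit.of_mul_eq_one _ hq1
      obtain ⟨c, hc, hcq⟩ := Polynomial.isUnit_iff.mp hqu
      have hmeq : m = Polynomial.X ^ s * Polynomial.C c := by rw [hfact, hcq]
      have : Polynomial.aeval x m = x ^ s * (algebraMap F _ c) := by
        rw [hmeq, map_mul, Polynomial.aeval_C, map_pow, Polynomial.aeval_X]
      rw [hm, minpoly.aeval] at this
      apply hx
      refine ⟨s, ?_⟩
      obtain ⟨cu, hcu⟩ := hc.exists_left_inv
      calc x ^ s = x ^ s * algebraMap F (Module.End F V) (c * cu) := by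
            rw [mul_comm c cu, hcu, map_one, mul_one]
        _ = (x ^ s * algebraMap F (Module.End F V) c) * algebraMap F (Module.End F V) cu := by
            rw [map_mul, mul_assoc]
        _ = 0 := by rw [← this, zero_mul]

/-- Ranges of orthogonal idempotents. -/
lemma aux_orth_idem {V : Type} [AddCommGroup V] [Module F V]
    (e f : Module.End F V) (he : IsIdempotentElem e) (hf : IsIdempotentElem f)
    (hef : e * f = 0) (hfe : f * e = 0) :
    LinearMap.range (e + f) = LinearMap.range e ⊔ LinearMap.range f ∧
      LinearMap.range e ⊓ LinearMap.range f = ⊥ := by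
  constructor
  · apply le_antisymm
    · rintro _ ⟨v, rfl⟩
      exact Submodule.add_mem_sup ⟨v, rfl⟩ ⟨v, rfl⟩
    · apply sup_le
      · rintro _ ⟨v, rfl⟩
        refine ⟨e v, ?_⟩
        have h1 : e (e v) = e v := by
          have := congrArg (fun g : Module.End F V => g v) he
          simpa [Module.End.mul_apply] using this
        have h2 : f (e v) = 0 := by
          have := congrArg (fun g : Module.End F V => g v) hfe
          simpa [Module.End.mul_apply] using this
        simp [LinearMap.add_apply, h1, h2]
      · rintro _ ⟨v, rfl⟩
        refine ⟨f v, ?_⟩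
        have h1 : f (f v) = f v := by
          have := congrArg (fun g : Module.End F V => g v) hf
          simpa [Module.End.mul_apply] using this
        have h2 : e (f v) = 0 := by
          have := congrArg (fun g : Module.End F V => g v) hef
          simpa [Module.End.mul_apply] using this
        simp [LinearMap.add_apply, h1, h2]
  · rw [eq_bot_iff]
    rintro v ⟨⟨a, ha⟩, ⟨b, hb⟩⟩
    have h1 : e v = v := by
      rw [← ha]
      have := congrArg (fun g : Module.End F V => g a) he
      simpa [Module.End.mul_apply] using this
    have h2 : e v = 0 := by
      rw [← hb]
      have := congrArg (fun g : Module.End F V => g b) hef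
      simpa [Module.End.mul_apply] using this
    rw [Submodule.mem_bot, ← h1, h2]

variable {L : Type} [LieRing L] [LieAlgebra F L]

/-- The key lemma: if `V` is a finite-dimensional irreducible `L`-module on which the ideal `K`
acts nontrivially, then the identity belongs to the non-unital associative algebra of
endomorphisms generated by the action of `K`. -/
theorem aux_one_mem_adjoin
    (K : LieIdeal F L) (V : Type) [AddCommGroup V] [Module F V] [LieRingModule L V]
    [LieModule F L V] [FiniteDimensional F V]
    (hV : LieModule.IsIrreducible F L V) (hKV : ¬ LieIdealActsTrivially K V) :
    (1 : Module.End F V) ∈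
      NonUnitalAlgebra.adjoin F (⇑(LieModule.toEnd F L V) '' (K : Set L)) := by
  classical
  set φ : L →ₗ⁅F⁆ Module.End F V := LieModule.toEnd F L V with hφ
  set A : NonUnitalSubalgebra F (Module.End F V) :=
    NonUnitalAlgebra.adjoin F (⇑φ '' (K : Set L)) with hA
  -- Step 1: A is stable under commutator with the image of L.
  have had : ∀ (l : L) (a : Module.End F V), a ∈ A → φ l * a - a * φ l ∈ A := by
    intro l a ha
    induction ha using NonUnitalAlgebra.adjoin_induction with
    | mem y hy =>
      obtain ⟨x, hx, rfl⟩ := hy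
      have h1 : φ l * φ x - φ x * φ l = φ ⁅l, x⁆ := by
        rw [φ.map_lie]; rfl
      rw [h1]
      exact NonUnitalAlgebra.subset_adjoin F ⟨⁅l, x⁆, K.lie_mem hx, rfl⟩
    | add x y hx hy ihx ihy =>
      have h1 : φ l * (x + y) - (x + y) * φ l = (φ l * x - x * φ l) + (φ l * y - y * φ l) := by
        noncomm_ring
      rw [h1]; exact add_mem ihx ihy
    | zero => simpa using zero_mem A
    | mul x y hx hy ihx ihy =>
      have h1 : φ l * (x * y) - x * y * φ l
          = (φ l * x - x * φ l) * y + x * (φ l * y - y * φ l) := by noncomm_ring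
      rw [h1]; exact add_mem (mul_mem ihx hy) (mul_mem hx ihy)
    | smul r x hx ihx =>
      have h1 : φ l * (r • x) - (r • x) * φ l = r • (φ l * x - x * φ l) := by
        rw [mul_smul_comm, smul_mul_assoc, smul_sub]
      rw [h1]; exact SMulMemClass.smul_mem r ihx
  -- Step 2: the set K·V spans V.
  set sset : Set V := {v | ∃ x ∈ K, ∃ u : V, ⁅x, u⁆ = v} with hsset
  have hssetA : ∀ v ∈ sset, ∃ a ∈ A, ∃ u : V, a u = v := by
    rintro v ⟨x, hx, u, rfl⟩
    exact ⟨φ x, NonUnitalAlgebra.subset_adjoin F ⟨x, hx, rfl⟩, u, rfl⟩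
  set MKV : LieSubmodule F L V :=
    { toSubmodule := Submodule.span F sset
      lie_mem := by
        intro l v hv
        show ⁅l, v⁆ ∈ Submodule.span F sset
        have hv' : v ∈ Submodule.span F sset := hv
        clear hv
        induction hv' using Submodule.span_induction with
        | mem v hvmem =>
          obtain ⟨x, hx, u, rfl⟩ := hvmem
          have h1 : ⁅l, ⁅x, u⁆⁆ = ⁅⁅l, x⁆, u⁆ + ⁅x, ⁅l, u⁆⁆ := leibniz_lie l x u
          rw [h1]
          exact add_mem (Submodule.subset_span ⟨⁅l, x⁆, K.lie_mem hx, u, rfl⟩)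
            (Submodule.subset_span ⟨x, hx, ⁅l, u⁆, rfl⟩)
        | zero => simpa using zero_mem (Submodule.span F sset)
        | add a b ha hb iha ihb => rw [lie_add]; exact add_mem iha ihb
        | smul r a ha iha => rw [lie_smul]; exact SMulMemClass.smul_mem r iha } with hMKV
  have hMKVtop : MKV = ⊤ := by
    rcases hV.eq_bot_or_eq_top MKV with h | h
    · exfalso
      apply hKV
      intro x hx v
      have : ⁅x, v⁆ ∈ MKV := Submodule.subset_span ⟨x, hx, v, rfl⟩
      rw [h] at this
      simpa using this
    · exact h
  have hspan : Submodule.span F sset = ⊤ := by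
    have : MKV.toSubmodule = (⊤ : LieSubmodule F L V).toSubmodule := by rw [hMKVtop]
    rw [LieSubmodule.top_toSubmodule] at this
    exact this
  -- Step 3: an endomorphism vanishing on K·V vanishes.
  have hkill : ∀ g : Module.End F V, (∀ v ∈ sset, g v = 0) → g = 0 := by
    intro g hg
    ext v
    have hv : v ∈ Submodule.span F sset := by rw [hspan]; exact Submodule.mem_top
    simp only [LinearMap.zero_apply]
    induction hv using Submodule.span_induction with
    | mem v hvmem => exact hg v hvmem
    | zero => simp
    | add a b ha hb iha ihb => rw [map_add, iha, ihb, add_zero]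
    | smul r a ha iha => rw [map_smul, iha, smul_zero]
  -- Step 4: a maximal-rank idempotent in A.
  set RS : Set ℕ := {n | ∃ e : Module.End F V, e ∈ A ∧ IsIdempotentElem e ∧
    Module.finrank F (LinearMap.range e) = n} with hRS
  have h0RS : (0 : ℕ) ∈ RS := by
    refine ⟨0, zero_mem A, IsIdempotentElem.zero, ?_⟩
    simp [LinearMap.range_zero]
  have hbdd : BddAbove RS := by
    refine ⟨Module.finrank F V, ?_⟩
    rintro n ⟨e, -, -, rfl⟩
    exact Submodule.finrank_le _
  obtain ⟨π, hπA, hπi, hπr⟩ := Nat.sSup_mem ⟨0, h0RS⟩ hbdd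
  have hmax : ∀ e : Module.End F V, e ∈ A → IsIdempotentElem e →
      Module.finrank F (LinearMap.range e) ≤ Module.finrank F (LinearMap.range π) := by
    intro e heA hei
    rw [hπr]
    exact le_csSup hbdd ⟨e, heA, hei, rfl⟩
  -- Now show π = 1.
  set σ : Module.End F V := 1 - π with hσ
  have hππ : π * π = π := hπi
  have hσπ : σ * π = 0 := by rw [hσ, sub_mul, one_mul, hππ, sub_self]
  have hπσ : π * σ = 0 := by rw [hσ, mul_sub, mul_one, hππ, sub_self]
  have hσmem : ∀ a ∈ A, σ * a * σ ∈ A := by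
    intro a ha
    have h1 : σ * a * σ = a - π * a - a * π + π * a * π := by
      rw [hσ]; noncomm_ring
    rw [h1]
    exact add_mem (sub_mem (sub_mem ha (mul_mem hπA ha)) (mul_mem ha hπA))
      (mul_mem (mul_mem hπA ha) hπA)
  -- Step 5: every σ a σ is nilpotent.
  have hnil : ∀ a ∈ A, IsNilpotent (σ * a * σ) := by
    intro a ha
    by_contra hcon
    obtain ⟨p, hp0, hpi, hpne⟩ := aux_fitting (σ * a * σ) hcon
    set τ : Module.End F V := Polynomial.aeval (σ * a * σ) p with hτ
    have hτA : τ ∈ A := aux_aeval_mem A (hσmem a ha) p hp0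
    have hπc : π * (σ * a * σ) = 0 := by
      rw [← mul_assoc, ← mul_assoc, hπσ, zero_mul, zero_mul]
    have hcπ : σ * a * σ * π = 0 := by rw [mul_assoc, hσπ, mul_zero]
    have hfactp : p = Polynomial.X * p.divX := by
      conv_lhs => rw [← Polynomial.X_mul_divX_add p]
      rw [hp0, map_zero, add_zero]
    have hπτ : π * τ = 0 := by
      rw [hτ, hfactp, map_mul, Polynomial.aeval_X, ← mul_assoc, hπc, zero_mul]
    have hτπ : τ * π = 0 := by
      have hfactp' : p = p.divX * Polynomial.X := by
        conv_lhs => rw [← Polynomial.divX_mul_X_add p]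
        rw [hp0, map_zero, add_zero]
      rw [hτ, hfactp', map_mul, Polynomial.aeval_X, mul_assoc, hcπ, mul_zero]
    have hsum : IsIdempotentElem (π + τ) := by
      unfold IsIdempotentElem
      have hττ : τ * τ = τ := hpi
      rw [add_mul, mul_add, mul_add, hππ, hπτ, hτπ, hττ, add_zero, zero_add]
    obtain ⟨hrange, hinf⟩ := aux_orth_idem π τ hπi hpi hπτ hτπ
    have hrank : Module.finrank F (LinearMap.range (π + τ))
        = Module.finrank F (LinearMap.range π) + Module.finrank F (LinearMap.range τ) := by
      rw [hrange, ← Submodule.finrank_sup_add_finrank_inf_eq, hinf, finrank_bot, add_zero]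
    have hτpos : 0 < Module.finrank F (LinearMap.range τ) := by
      rcases Nat.eq_zero_or_pos (Module.finrank F (LinearMap.range τ)) with h | h
      · exfalso
        apply hpne
        have : LinearMap.range τ = ⊥ := Submodule.finrank_eq_zero.mp h
        rw [LinearMap.range_eq_bot] at this
        exact this
      · exact h
    have hle := hmax (π + τ) (add_mem hπA hτA) hsum
    omega
  -- Step 6: either ker π = ⊥ (π injective) or we find a common kernel vector via Engel.
  by_cases hker : LinearMap.ker π = ⊥
  · have hπ1 : π = 1 := by
      ext v
      have h1 : π (v - π v) = 0 := by
        have : π (π v) = π v := by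
          have := congrArg (fun g : Module.End F V => g v) hππ
          simpa [Module.End.mul_apply] using this
        rw [map_sub, this, sub_self]
      have h2 : v - π v ∈ LinearMap.ker π := h1
      rw [hker, Submodule.mem_bot, sub_eq_zero] at h2
      simp [← h2]
    rw [← hπ1]
    exact hπA
  · -- Engel branch
    set V₀ : Submodule F V := LinearMap.ker π with hV₀
    have hσV₀ : ∀ v : V, σ v ∈ V₀ := by
      intro v
      have : π (σ v) = 0 := by
        have := congrArg (fun g : Module.End F V => g v) hπσ
        simpa [Module.End.mul_apply] using this
      exact this
    have hfix : ∀ v ∈ V₀, σ v = v := by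
      intro v hv
      have hπv : π v = 0 := hv
      rw [hσ]
      simp [LinearMap.sub_apply, hπv]
    set pr : V →ₗ[F] V₀ := σ.codRestrict V₀ hσV₀ with hpr
    set Ψ : Module.End F V →ₗ[F] Module.End F V₀ :=
      { toFun := fun g => pr ∘ₗ g ∘ₗ V₀.subtype
        map_add' := by intro g h; ext v; simp
        map_smul' := by intro c g; ext v; simp } with hΨ
    have hΨap : ∀ (g : Module.End F V) (v : V₀), ((Ψ g v : V₀) : V) = σ (g (v : V)) := by
      intro g v; rfl
    set LA₀ : Submodule F (Module.End F V₀) := Submodule.map Ψ A.toSubmodule with hLA₀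
    have hbr : ∀ a b : Module.End F V, a ∈ A → b ∈ A →
        Ψ a * Ψ b = Ψ (a * (σ * b)) := by
      intro a b ha hb
      ext v
      rfl
    have hmul_mem : ∀ a b : Module.End F V, a ∈ A → b ∈ A → a * (σ * b) ∈ A := by
      intro a b ha hb
      have h1 : a * (σ * b) = a * b - a * (π * b) := by rw [hσ]; noncomm_ring
      rw [h1]
      exact sub_mem (mul_mem ha hb) (mul_mem ha (mul_mem hπA hb))
    set LA : LieSubalgebra F (Module.End F V₀) :=
      { LA₀ with
        lie_mem' := by
          intro x y hx hy
          obtain ⟨a, haA, rfl⟩ := hx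
          obtain ⟨b, hbA, rfl⟩ := hy
          have h1 : ⁅Ψ a, Ψ b⁆ = Ψ a * Ψ b - Ψ b * Ψ a := rfl
          rw [h1, hbr a b haA hbA, hbr b a hbA haA, ← map_sub]
          exact ⟨a * (σ * b) - b * (σ * a),
            sub_mem (hmul_mem a b haA hbA) (hmul_mem b a hbA haA), rfl⟩ } with hLA
    haveI hnontriv : Nontrivial V₀ := Submodule.nontrivial_iff_ne_bot.mpr hker
    haveI : IsNoetherian F LA := by
      have : FiniteDimensional F LA₀ := inferInstance
      exact IsNoetherian.iff_fg.mpr this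
    have hengelhyp : ∀ x : LA, IsNilpotent (LieModule.toEnd F LA V₀ x) := by
      rintro ⟨g, hg⟩
      obtain ⟨a, haA, rfl⟩ := hg
      obtain ⟨n, hn⟩ := hnil a haA
      have htoEnd : LieModule.toEnd F LA V₀ ⟨Ψ a, ⟨a, haA, rfl⟩⟩ = Ψ a := by
        ext v; rfl
      rw [htoEnd]
      refine ⟨n, ?_⟩
      have hiter : ∀ (k : ℕ) (v : V₀), ((((Ψ a) ^ k) v : V₀) : V) = ((σ * a * σ) ^ k) (v : V) := by
        intro k
        induction k with
        | zero => intro v; simp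
        | succ k ih =>
          intro v
          rw [pow_succ', pow_succ']
          rw [Module.End.mul_apply, Module.End.mul_apply]
          have h2 : ((Ψ a) (((Ψ a) ^ k) v) : V) = σ (a ((((Ψ a) ^ k) v : V₀) : V)) := hΨap _ _
          rw [h2, ih v]
          have h3 : σ (((σ * a * σ) ^ k) (v : V)) = ((σ * a * σ) ^ k) (v : V) := by
            rw [← ih v]; exact hfix _ ((((Ψ a) ^ k) v).2)
          conv_rhs => rw [Module.End.mul_apply, Module.End.mul_apply, h3]
      ext v
      have h4 : ((((Ψ a) ^ n) v : V₀) : V) = 0 := by rw [hiter n v, hn]; simp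
      simpa using h4
    -- Engel's theorem gives a nonzero common kernel vector in V₀.
    have hnilmod : LieModule.IsNilpotent LA V₀ :=
      LieAlgebra.isEngelian_of_isNoetherian V₀ hengelhyp
    haveI := hnilmod
    haveI := LieModule.nontrivial_max_triv_of_isNilpotent (R := F) (L := LA) (M := V₀)
    obtain ⟨mt, hmt⟩ := exists_ne (0 : (LieModule.maxTrivSubmodule F LA V₀))
    set z : V := ((mt : V₀) : V) with hz
    have hz0 : z ≠ 0 := by
      intro h
      exact hmt (Subtype.ext (Subtype.ext h))
    have hzZ : ∀ a ∈ A, σ (a z) = 0 := by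
      intro a ha
      have hx := (LieModule.mem_maxTrivSubmodule F LA V₀ (mt : V₀)).mp mt.2
        ⟨Ψ a, ⟨a, ha, rfl⟩⟩
      rw [LieSubalgebra.coe_bracket_of_module, Module.End.lie_apply] at hx
      have h5 := congrArg (fun w : V₀ => (w : V)) hx
      have h6 : ((Ψ a (mt : V₀) : V₀) : V) = σ (a z) := hΨap a (mt : V₀)
      simp only [h6] at h5
      simpa using h5
    -- The common kernel space Z is an L-submodule.
    set Z : LieSubmodule F L V :=
      { carrier := {v | ∀ a ∈ A, σ (a v) = 0}
        add_mem' := by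
          intro v w hvz hwz a ha
          rw [map_add, map_add, hvz a ha, hwz a ha, add_zero]
        zero_mem' := by intro a ha; rw [map_zero, map_zero]
        smul_mem' := by
          intro c v hvz a ha
          rw [map_smul, map_smul, hvz a ha, smul_zero]
        lie_mem := by
          intro l v hv
          intro a ha
          have hca : φ l * a - a * φ l ∈ A := had l a ha
          have hbrack : a ⁅l, v⁆ = φ l (a v) - (φ l * a - a * φ l) v := by
            have h0 : ⁅l, v⁆ = φ l v := rfl
            rw [h0]
            simp only [LinearMap.sub_apply, Module.End.mul_apply]
            abel
          rw [hbrack, map_sub, hv _ hca, sub_zero]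
          have hav : a v = π (a v) := by
            have h8 := hv a ha
            have h9 : (a v) - π (a v) = 0 := by
              simpa [hσ, LinearMap.sub_apply] using h8
            exact sub_eq_zero.mp h9
          rw [hav]
          have hc2 : φ l * π - π * φ l ∈ A := had l π hπA
          have hexp : φ l (π (a v)) = π (φ l (a v)) + ((φ l * π - π * φ l) * a) v := by
            simp only [LinearMap.sub_apply, Module.End.mul_apply]
            abel
          rw [hexp, map_add]
          have h6 : σ (π (φ l (a v))) = 0 := by
            have := congrArg (fun g : Module.End F V => g (φ l (a v))) hσπ
            simpa [Module.End.mul_apply] using this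
          rw [h6, hv _ (mul_mem hc2 ha), add_zero] } with hZ
    have hzmem : z ∈ Z := hzZ
    have hZtop : Z = ⊤ := by
      rcases hV.eq_bot_or_eq_top Z with h | h
      · exfalso
        rw [h] at hzmem
        exact hz0 (by simpa using hzmem)
      · exact h
    have hσ0 : σ = 0 := by
      apply hkill
      rintro v ⟨x, hx, u, rfl⟩
      have hmem : u ∈ Z := by rw [hZtop]; exact LieSubmodule.mem_top u
      exact hmem (φ x) (NonUnitalAlgebra.subset_adjoin F ⟨x, hx, rfl⟩)
    have hπ1 : (1 : Module.End F V) = π := by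
      have := sub_eq_zero.mp (hσ ▸ hσ0)
      exact this
    rw [hπ1]
    exact hπA

end Auxiliary

/-- Let `K` be an ideal of `L` and `V`, `W` finite-dimensional irreducible
`L`-modules with `K` acting non-trivially on `V` and trivially on `W`.  Then `K` acts
non-trivially on every composition factor of `V ⊗ W`.  (In a finite-dimensional module the
composition factors are exactly the irreducible `L`-module quotients of submodules, so a
composition factor is rendered as an irreducible module `U` admitting a surjective
`L`-module map from a submodule `N` of `V ⊗ W`.) -/
theorem acts_nontrivially_on_composition_factors_of_tensor
    {F L : Type} [Field F] [LieRing L] [LieAlgebra F L]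
    (K : LieIdeal F L)
    (V W : Type) [AddCommGroup V] [Module F V] [LieRingModule L V] [LieModule F L V]
    [AddCommGroup W] [Module F W] [LieRingModule L W] [LieModule F L W]
    [FiniteDimensional F V] [FiniteDimensional F W]
    (hV : LieModule.IsIrreducible F L V) (hW : LieModule.IsIrreducible F L W)
    (hKV : ¬ LieIdealActsTrivially K V) (hKW : LieIdealActsTrivially K W)
    (U : Type) [AddCommGroup U] [Module F U] [LieRingModule L U] [LieModule F L U]
    (hU : LieModule.IsIrreducible F L U)
    (N : LieSubmodule F L (V ⊗[F] W)) (f : N →ₗ⁅F,L⁆ U) (hf : Function.Surjective f) :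
    ¬ LieIdealActsTrivially K U := by
  intro htriv
  classical
  have h1 := aux_one_mem_adjoin K V hV hKV
  set φ : L →ₗ⁅F⁆ Module.End F V := LieModule.toEnd F L V with hφ
  -- On V ⊗ W, an element of K acts via rTensor of its action on V.
  have hbr : ∀ x ∈ K, ∀ t : V ⊗[F] W, ⁅x, t⁆ = LinearMap.rTensor W (φ x) t := by
    intro x hx t
    induction t using TensorProduct.induction_on with
    | zero => simp
    | tmul v w =>
      rw [TensorProduct.LieModule.lie_tmul_right, hKW x hx w, TensorProduct.tmul_zero,
        add_zero, LinearMap.rTensor_tmul]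
      rfl
    | add a b ha hb => rw [lie_add, map_add, ha, hb]
  -- The subspace of elements of N killed by f.
  set Mf : Submodule F (V ⊗[F] W) :=
    { carrier := {t | ∃ ht : t ∈ N, f ⟨t, ht⟩ = 0}
      add_mem' := by
        rintro a b ⟨ha, hfa⟩ ⟨hb, hfb⟩
        refine ⟨N.add_mem ha hb, ?_⟩
        have : (⟨a + b, N.add_mem ha hb⟩ : N) = ⟨a, ha⟩ + ⟨b, hb⟩ := rfl
        rw [this, map_add f, hfa, hfb, add_zero]
      zero_mem' := by
        refine ⟨N.zero_mem, ?_⟩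
        have : (⟨0, N.zero_mem⟩ : N) = 0 := rfl
        rw [this, map_zero f]
      smul_mem' := by
        rintro c t ⟨ht, hft⟩
        refine ⟨N.smul_mem c ht, ?_⟩
        have : (⟨c • t, N.smul_mem c ht⟩ : N) = c • (⟨t, ht⟩ : N) := rfl
        rw [this, map_smul f, hft, smul_zero] } with hMf
  have hMfN : ∀ t, t ∈ Mf → t ∈ N := fun t ht => ht.1
  -- Every element of the algebra generated by the K-action maps N into Mf.
  have key : ∀ a : Module.End F V, a ∈ NonUnitalAlgebra.adjoin F (⇑φ '' (K : Set L)) →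
      ∀ t : V ⊗[F] W, t ∈ N → LinearMap.rTensor W a t ∈ Mf := by
    intro a ha
    induction ha using NonUnitalAlgebra.adjoin_induction with
    | mem y hy =>
      obtain ⟨x, hx, rfl⟩ := hy
      intro t ht
      rw [← hbr x hx t]
      refine ⟨N.lie_mem ht, ?_⟩
      have hnb : (⟨⁅x, t⁆, N.lie_mem ht⟩ : N) = ⁅x, (⟨t, ht⟩ : N)⁆ := rfl
      rw [hnb, f.map_lie]
      exact htriv x hx _
    | add x y hx hy ihx ihy =>
      intro t ht
      rw [LinearMap.rTensor_add, LinearMap.add_apply]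
      exact Mf.add_mem (ihx t ht) (ihy t ht)
    | zero =>
      intro t ht
      rw [LinearMap.rTensor_zero]
      exact Mf.zero_mem
    | mul x y hx hy ihx ihy =>
      intro t ht
      rw [LinearMap.rTensor_mul, Module.End.mul_apply]
      exact ihx _ (hMfN _ (ihy t ht))
    | smul c x hx ihx =>
      intro t ht
      rw [LinearMap.rTensor_smul, LinearMap.smul_apply]
      exact Mf.smul_mem c (ihx t ht)
  -- Applying this with the identity shows f = 0.
  have hzero : ∀ n : N, f n = 0 := by
    intro n
    have hmem := key 1 h1 (n : V ⊗[F] W) n.2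
    rw [show ((1 : Module.End F V) : V →ₗ[F] V) = LinearMap.id from rfl,
      LinearMap.rTensor_id, LinearMap.id_apply] at hmem
    obtain ⟨ht, hft⟩ := hmem
    have : (⟨(n : V ⊗[F] W), ht⟩ : N) = n := Subtype.ext rfl
    rw [this] at hft
    exact hft
  haveI := hU
  haveI : Nontrivial U := LieModule.nontrivial_of_isIrreducible F L U
  obtain ⟨u, hu⟩ := exists_ne (0 : U)
  obtain ⟨n, hn⟩ := hf u
  rw [hzero n] at hn
  exact hu hn.symm
end

section
/- Let $L$ be a finite-dimensional Lie algebra over an algebraically closed field $F$ of characteristic $p \ne 0$. Suppose $V$ is a faithful irreducible $L$-module, and let $A_1, \dots, A_r$ be pairwise isomorphic abelian minimal ideals of $L$ (as $L$-modules, via isomorphisms $\phi_i : A_1 \to A_i$) whose sum is direct, chosen with $r$ maximal. Then $r \leq \dim_F(A_1)$. -/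
/-- Let `L` be a finite-dimensional Lie algebra over an algebraically
closed field of characteristic `p ≠ 0`, let `V` be a faithful irreducible `L`-module,
and let `A 0, …, A (r-1)` be pairwise isomorphic abelian minimal ideals (via `L`-module
isomorphisms `φ i : A 0 ≃ A i`) whose sum is direct, with `r` maximal.  Then
`r ≤ dim_F (A 0)`. -/
theorem multiplicity_le_dim_of_faithful_irreducible
    {F L : Type} [Field F] [IsAlgClosed F] [LieRing L] [LieAlgebra F L] {p : ℕ}
    [CharP F p] (hp : p ≠ 0) [FiniteDimensional F L]
    (V : Type) [AddCommGroup V] [Module F V] [LieRingModule L V] [LieModule F L V]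
    [FiniteDimensional F V]
    (hV : LieModule.IsIrreducible F L V)
    (hfaithful : Function.Injective (LieModule.toEnd F L V))
    (r : ℕ) (hr : 0 < r) (A : Fin r → LieIdeal F L)
    (hmin : ∀ i, IsAtom (A i))
    (habelian : ∀ i, ∀ a ∈ A i, ∀ b ∈ A i, ⁅a, b⁆ = (0 : L))
    (hindep : iSupIndep A)
    (φ : ∀ i, (↥(A ⟨0, hr⟩) ≃ₗ⁅F,L⁆ ↥(A i)))
    (hmax : ∀ B : LieIdeal F L, IsAtom B → Nonempty (↥B ≃ₗ⁅F,L⁆ ↥(A ⟨0, hr⟩)) →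
      ¬ Disjoint B (⨆ i, A i)) :
    r ≤ Module.finrank F ↥(A ⟨0, hr⟩) := by
  classical
  haveI := hV
  haveI : Nontrivial V := LieModule.nontrivial_of_isIrreducible F L V
  set i0 : Fin r := ⟨0, hr⟩ with hi0
  set S : LieIdeal F L := ⨆ i, A i with hSdef
  have hAS : ∀ i, A i ≤ S := fun i => le_iSup A i
  -- The sum of the `A i` is an abelian ideal.
  have hSab : ∀ y ∈ S, ∀ x ∈ S, ⁅x, y⁆ = (0 : L) := by
    intro y hy
    induction hy using LieSubmodule.iSup_induction' with
    | mem j y hyj =>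
      intro x hx
      induction hx using LieSubmodule.iSup_induction' with
      | mem i x hxi =>
        rcases eq_or_ne i j with rfl | hij
        · exact habelian i x hxi y hyj
        · have h1 : ⁅x, y⁆ ∈ A i := by
            have h0 : ⁅y, x⁆ ∈ A i := (A i).lie_mem hxi
            have h0' := (A i).neg_mem h0
            rwa [← lie_skew, neg_neg] at h0'
          have h2 : ⁅x, y⁆ ∈ A j := (A j).lie_mem hyj
          have hd : Disjoint (A i) (A j) := hindep.pairwiseDisjoint hij
          have : ⁅x, y⁆ ∈ (⊥ : LieIdeal F L) :=
            (disjoint_iff.mp hd) ▸ (LieSubmodule.mem_inf _ _ _).mpr ⟨h1, h2⟩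
          exact (LieSubmodule.mem_bot _).mp this
      | zero => simp
      | add x x' _ _ hx hx' => rw [add_lie, hx, hx', add_zero]
    | zero => intro x hx; simp
    | add y y' _ _ hy hy' => intro x hx; rw [lie_add, hy x hx, hy' x hx, add_zero]
  haveI hSabelian : IsLieAbelian (↥S) := by
    constructor
    intro x y
    apply Subtype.ext
    simpa using hSab (y : L) y.2 (x : L) x.2
  -- V has a weight for the abelian (hence nilpotent) ideal S, with eigenvector v.
  obtain ⟨χ⟩ : Nonempty (LieModule.Weight F (↥S) V) := by
    by_contra hcon
    rw [not_nonempty_iff] at hcon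
    have h1 := LieModule.iSup_genWeightSpace_eq_top' F (↥S) V
    rw [iSup_of_empty] at h1
    haveI : Nontrivial (LieSubmodule F (↥S) V) :=
      (LieSubmodule.nontrivial_iff F (↥S) V).mpr ‹Nontrivial V›
    exact bot_ne_top h1
  obtain ⟨v, hv0, hv⟩ := LieModule.exists_forall_lie_eq_smul F (↥S) V χ
  -- The dual functionals `c i` on `A i0`.
  set c : Fin r → (↥(A i0) →ₗ[F] F) := fun i =>
    ((χ : ↥S →ₗ[F] F).comp ((LieSubmodule.inclusion (hAS i)).toLinearMap.comp
      (φ i).toLinearEquiv.toLinearMap)) with hc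
  have hli : LinearIndependent F c := by
    rw [Fintype.linearIndependent_iff]
    intro g hg j
    -- the S-valued combination and its image in L
    set bS : ↥(A i0) → ↥S := fun x =>
      ∑ i, g i • (LieSubmodule.inclusion (hAS i)) (φ i x) with hbS
    set bfun : ↥(A i0) → L := fun x => ((bS x : ↥S) : L) with hbfun
    have hbcoe : ∀ x : ↥(A i0), bfun x = ∑ i, g i • ((φ i x : ↥(A i)) : L) := by
      intro x
      rw [hbfun, hbS]
      push_cast
      simp [LieSubmodule.coe_inclusion]
    -- χ vanishes on the image of bS
    have hχ0 : ∀ x : ↥(A i0), χ (bS x) = 0 := by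
      intro x
      have hgx : (∑ i, g i • c i) x = 0 := by rw [hg]; rfl
      rw [hbS]
      have : χ (∑ i, g i • (LieSubmodule.inclusion (hAS i)) (φ i x))
          = ∑ i, g i • χ ((LieSubmodule.inclusion (hAS i)) (φ i x)) := by
        rw [map_sum]
        exact Finset.sum_congr rfl fun i _ => map_smul (χ : ↥S →ₗ[F] F) _ _
      rw [this]
      simpa [hc, smul_eq_mul] using hgx
    -- bfun is L-equivariant
    have hφlie : ∀ i (y : L) (x : ↥(A i0)), φ i ⁅y, x⁆ = ⁅y, φ i x⁆ := by
      intro i y x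
      exact LieModuleHom.map_lie ((φ i : ↥(A i0) →ₗ⁅F,L⁆ ↥(A i))) y x
    have hb_lie : ∀ (y : L) (x : ↥(A i0)), ⁅y, bfun x⁆ = bfun ⁅y, x⁆ := by
      intro y x
      rw [hbcoe, hbcoe, ← LieModule.toEnd_apply_apply F L L y, map_sum]
      refine Finset.sum_congr rfl fun i _ => ?_
      rw [map_smul]
      congr 1
      rw [LieModule.toEnd_apply_apply, ← LieSubmodule.coe_bracket, hφlie]
    -- the submodule on which the image of bfun acts trivially
    set W : LieSubmodule F L V :=
      { carrier := {w : V | ∀ x : ↥(A i0), ⁅bfun x, w⁆ = 0}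
        add_mem' := fun hu hw x => by rw [lie_add, hu x, hw x, add_zero]
        zero_mem' := fun x => by rw [lie_zero]
        smul_mem' := fun t w hw x => by rw [lie_smul, hw x, smul_zero]
        lie_mem := fun {y w} hw x => by
          have h1 : ⁅bfun x, ⁅y, w⁆⁆
              = ⁅y, ⁅bfun x, w⁆⁆ - ⁅⁅y, bfun x⁆, w⁆ := by
            rw [leibniz_lie y (bfun x) w]; abel
          rw [h1, hw x, hb_lie, hw ⁅y, x⁆, lie_zero, zero_sub, neg_zero] } with hW
    have hvW : v ∈ W := by
      intro x
      have h2 : ⁅bfun x, v⁆ = ⁅bS x, v⁆ :=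
        (LieIdeal.coe_bracket_of_module (M := V) S (bS x) v).symm
      rw [h2, hv, hχ0, zero_smul]
    have hWtop : W = ⊤ := by
      rcases hV.eq_bot_or_eq_top W with h | h
      · rw [h] at hvW
        exact absurd ((LieSubmodule.mem_bot _).mp hvW) hv0
      · exact h
    -- faithfulness: bfun x = 0 for all x
    have hb0 : ∀ x : ↥(A i0), bfun x = 0 := by
      intro x
      have hz : LieModule.toEnd F L V (bfun x) = 0 := by
        ext w
        have hwW : w ∈ W := by rw [hWtop]; exact LieSubmodule.mem_top w
        simpa [LieModule.toEnd_apply_apply] using hwW x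
      apply hfaithful
      rw [hz, map_zero]
    -- pick a nonzero element of A i0
    haveI : Nontrivial ↥(A i0) :=
      (LieSubmodule.nontrivial_iff_ne_bot F L L).mpr (hmin i0).1
    obtain ⟨a, ha0⟩ := exists_ne (0 : ↥(A i0))
    -- independence of the A i forces each component zero
    have hsum : ∑ i, g i • ((φ i a : ↥(A i)) : L) = 0 := by
      rw [← hbcoe]; exact hb0 a
    have hj1 : g j • ((φ j a : ↥(A j)) : L) ∈ A j := (A j).smul_mem _ (φ j a).2
    have hj2 : g j • ((φ j a : ↥(A j)) : L) ∈ ⨆ i ≠ j, A i := by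
      have h3 : g j • ((φ j a : ↥(A j)) : L)
          = -∑ i ∈ Finset.univ.erase j, g i • ((φ i a : ↥(A i)) : L) := by
        have h2 := Finset.sum_erase_add Finset.univ
          (fun i => g i • ((φ i a : ↥(A i)) : L)) (Finset.mem_univ j)
        rw [hsum] at h2
        simpa using eq_neg_of_add_eq_zero_right h2
      rw [h3]
      refine neg_mem (Submodule.sum_mem _ fun i hi => ?_)
      have hij : i ≠ j := Finset.ne_of_mem_erase hi
      exact (le_iSup₂ (f := fun i (_ : i ≠ j) => A i) i hij)
        ((A i).smul_mem _ (φ i a).2)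
    have hdis : Disjoint (A j) (⨆ i ≠ j, A i) := hindep j
    have hzero : g j • ((φ j a : ↥(A j)) : L) = 0 := by
      have hmem : g j • ((φ j a : ↥(A j)) : L) ∈ (⊥ : LieIdeal F L) :=
        (disjoint_iff.mp hdis) ▸ (LieSubmodule.mem_inf _ _ _).mpr ⟨hj1, hj2⟩
      exact (LieSubmodule.mem_bot _).mp hmem
    have hzero' : g j • (φ j a) = 0 := by
      apply Subtype.ext
      simpa using hzero
    rcases smul_eq_zero.mp hzero' with h | h
    · exact h
    · refine absurd ?_ ha0
      exact (φ j).toLinearEquiv.map_eq_zero_iff.mp h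
  -- conclude
  haveI : FiniteDimensional F ↥(A i0) := inferInstance
  have h1 := hli.fintype_card_le_finrank
  rw [Fintype.card_fin] at h1
  rwa [Subspace.dual_finrank_eq] at h1
end

section
/- Let $L$ be a finite-dimensional Lie algebra over an algebraically closed field $F$ of characteristic $p \ne 0$ satisfying: for each abelian minimal ideal $A$, the multiplicity of the isomorphism type of $A$ is at most $\dim_F A$. Let $L^e$ be a minimal $p$-envelope of $L$. Then every minimal ideal of $L^e$ is contained in $L$, and $L^e$ also satisfies the same multiplicity condition. -/
/-- A `p`-operation making `L` a restricted Lie algebra (Jacobson's formula is encoded as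
additivity of `x ↦ ι(x)^p - ι(x^[p])` in the universal enveloping algebra). -/
structure POperation (F L : Type) [Field F] [LieRing L] [LieAlgebra F L] (p : ℕ) where
  pOp : L → L
  ad_pow : ∀ x : L, (LieAlgebra.ad F L x) ^ p = LieAlgebra.ad F L (pOp x)
  smul_pow : ∀ (t : F) (x : L), pOp (t • x) = t ^ p • pOp x
  jacobson : ∀ x y : L,
    (UniversalEnvelopingAlgebra.ι F (x + y)) ^ p
        - UniversalEnvelopingAlgebra.ι F (pOp (x + y)) =
      ((UniversalEnvelopingAlgebra.ι F x) ^ p - UniversalEnvelopingAlgebra.ι F (pOp x)) +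
        ((UniversalEnvelopingAlgebra.ι F y) ^ p - UniversalEnvelopingAlgebra.ι F (pOp y))

/-- A `p`-envelope of the Lie algebra `L`: a finite-dimensional restricted Lie algebra
containing (a copy of) `L` as an ideal, generated as a restricted algebra by `L`. -/
structure PEnvelope (F L : Type) [Field F] [LieRing L] [LieAlgebra F L] (p : ℕ) where
  env : Type
  [isLieRing : LieRing env]
  [isLieAlgebra : LieAlgebra F env]
  finDim : FiniteDimensional F env
  pstruct : POperation F env p
  E : LieIdeal F env
  iso : L ≃ₗ⁅F⁆ ↥E
  generates : ∀ S : LieSubalgebra F env, (E : LieSubalgebra F env) ≤ S →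
    (∀ x ∈ S, pstruct.pOp x ∈ S) → S = ⊤

attribute [instance] PEnvelope.isLieRing PEnvelope.isLieAlgebra

/-- The multiplicity condition on a Lie algebra: whenever `A 0, …, A (r-1)` are pairwise
isomorphic abelian minimal ideals whose sum is direct, `r ≤ dim_F (A 0)`. -/
def MultiplicityCondition (F M : Type) [Field F] [LieRing M] [LieAlgebra F M] : Prop :=
  ∀ (r : ℕ) (hr : 0 < r) (A : Fin r → LieIdeal F M),
    (∀ i, IsAtom (A i)) →
    (∀ i, ∀ a ∈ A i, ∀ b ∈ A i, ⁅a, b⁆ = (0 : M)) →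
    iSupIndep A →
    (∀ i, Nonempty (↥(A ⟨0, hr⟩) ≃ₗ⁅F,M⁆ ↥(A i))) →
    r ≤ Module.finrank F ↥(A ⟨0, hr⟩)

section Aux

variable {F L : Type} [Field F] [LieRing L] [LieAlgebra F L] {p : ℕ} [Fact p.Prime]

lemma aux_pow_mem {M : Type} [LieRing M] [LieAlgebra F M] (J : Submodule F M) (x : M)
    (hx : ∀ j ∈ J, ⁅x, j⁆ ∈ J) : ∀ n, ∀ j ∈ J, ((LieAlgebra.ad F M x) ^ n) j ∈ J := by
  intro n
  induction n with
  | zero => intro j hj; simpa using hj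
  | succ n ih =>
      intro j hj
      rw [pow_succ, Module.End.mul_apply]
      exact ih _ (by simpa using hx j hj)

lemma derived_mem (Le : PEnvelope F L p) (x y : Le.env) : ⁅x, y⁆ ∈ Le.E := by
  classical
  set S : LieSubalgebra F Le.env :=
    { carrier := {x | ∀ y, ⁅x, y⁆ ∈ Le.E}
      add_mem' := fun ha hb y => by
        rw [add_lie]; exact add_mem (ha y) (hb y)
      zero_mem' := fun y => by rw [zero_lie]; exact zero_mem _
      smul_mem' := fun t a ha y => by
        rw [smul_lie]; exact Submodule.smul_mem _ _ (ha y)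
      lie_mem' := fun {a b} ha hb y => by
        rw [lie_lie]; exact sub_mem (ha _) (hb _) } with hS
  have hES : (Le.E : LieSubalgebra F Le.env) ≤ S := by
    intro e he y
    have : ⁅y, e⁆ ∈ Le.E := Le.E.lie_mem he
    simpa using neg_mem this
  have hPS : ∀ z ∈ S, Le.pstruct.pOp z ∈ S := by
    intro z hz y
    have hp : ⁅Le.pstruct.pOp z, y⁆ = ((LieAlgebra.ad F Le.env z) ^ p) y := by
      rw [Le.pstruct.ad_pow]; rfl
    rw [hp]
    obtain ⟨q, hq⟩ : ∃ q, p = q + 1 :=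
      ⟨p - 1, (Nat.succ_pred_eq_of_pos (Fact.out (p := p.Prime)).pos).symm⟩
    have hps : (LieAlgebra.ad F Le.env z) ^ p
        = (LieAlgebra.ad F Le.env z) ^ q * LieAlgebra.ad F Le.env z := by
      rw [← pow_succ, ← hq]
    rw [hps, Module.End.mul_apply]
    exact aux_pow_mem (Le.E : Submodule F Le.env) z (fun j _ => Le.E.lie_mem (by assumption)) q _
      (by simpa using hz y)
  have : S = ⊤ := Le.generates S hES hPS
  have hx : x ∈ S := this ▸ LieSubalgebra.mem_top x
  exact hx y

lemma stab (Le : PEnvelope F L p) (J : Submodule F Le.env)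
    (hJ : ∀ e ∈ Le.E, ∀ j ∈ J, ⁅e, j⁆ ∈ J) :
    ∀ x : Le.env, ∀ j ∈ J, ⁅x, j⁆ ∈ J := by
  classical
  intro x
  set S : LieSubalgebra F Le.env :=
    { carrier := {x | ∀ j ∈ J, ⁅x, j⁆ ∈ J}
      add_mem' := fun ha hb j hj => by
        rw [add_lie]; exact add_mem (ha j hj) (hb j hj)
      zero_mem' := fun j hj => by rw [zero_lie]; exact zero_mem _
      smul_mem' := fun t a ha j hj => by
        rw [smul_lie]; exact Submodule.smul_mem _ _ (ha j hj)
      lie_mem' := fun {a b} ha hb j hj => by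
        rw [lie_lie]; exact sub_mem (ha _ (hb _ hj)) (hb _ (ha _ hj)) } with hS
  have hES : (Le.E : LieSubalgebra F Le.env) ≤ S := by
    intro e he j hj
    exact hJ e he j hj
  have hPS : ∀ z ∈ S, Le.pstruct.pOp z ∈ S := by
    intro z hz j hj
    have hp : ⁅Le.pstruct.pOp z, j⁆ = ((LieAlgebra.ad F Le.env z) ^ p) j := by
      rw [Le.pstruct.ad_pow]; rfl
    rw [hp]
    exact aux_pow_mem J z hz p j hj
  have : S = ⊤ := Le.generates S hES hPS
  have hx : x ∈ S := this ▸ LieSubalgebra.mem_top x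
  exact fun j hj => hx j hj

attribute [local instance 100] LieRing.ofAssociativeRing

set_option maxHeartbeats 1000000 in
lemma part1 (Le : PEnvelope F L p)
    (hminimal : ∀ M : PEnvelope F L p, Module.finrank F Le.env ≤ Module.finrank F M.env)
    (B : LieIdeal F Le.env) (hB : IsAtom B) : B ≤ Le.E := by
  classical
  by_contra hBE
  have _i : FiniteDimensional F Le.env := Le.finDim
  have hBEbot : B ⊓ Le.E = ⊥ := by
    apply hB.2
    rcases lt_or_eq_of_le (inf_le_left : B ⊓ Le.E ≤ B) with h | h
    · exact h
    · exact absurd (inf_eq_left.mp h) hBE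
  have hBcent : ∀ b ∈ B, ∀ x : Le.env, ⁅b, x⁆ = 0 := by
    intro b hb x
    have h1 : ⁅x, b⁆ ∈ B ⊓ Le.E :=
      (LieSubmodule.mem_inf _ _ _).mpr ⟨B.lie_mem hb, derived_mem Le x b⟩
    rw [hBEbot] at h1
    have h2 : ⁅x, b⁆ = 0 := by simpa using h1
    rw [← lie_skew, h2, neg_zero]
  -- the center as a submodule
  set Zm : Submodule F Le.env :=
    { carrier := {x : Le.env | ∀ y : Le.env, ⁅x, y⁆ = 0}
      add_mem' := fun {a b} ha hb => fun y => by rw [add_lie, ha y, hb y, add_zero]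
      zero_mem' := fun y => zero_lie y
      smul_mem' := fun t a ha => fun y => by rw [smul_lie, ha y, smul_zero] } with hZm
  have memZm : ∀ z : Le.env, z ∈ Zm ↔ ∀ y : Le.env, ⁅z, y⁆ = 0 := fun z => Iff.rfl
  set Em : Submodule F Le.env := (Le.E : Submodule F Le.env) with hEm
  have memEm : ∀ z : Le.env, z ∈ Em ↔ z ∈ Le.E := fun z => Iff.rfl
  set Xm : Submodule F Le.env := Zm ⊓ Em with hXm
  obtain ⟨C₀, hC₀⟩ := Submodule.exists_isCompl (Xm.comap Zm.subtype)
  set Cm : Submodule F Le.env := C₀.map Zm.subtype with hCm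
  have hinj : Function.Injective Zm.subtype := Submodule.injective_subtype Zm
  have hCmZ : Cm ≤ Zm := Submodule.map_subtype_le _ _
  have hXmap : (Xm.comap Zm.subtype).map Zm.subtype = Xm := by
    rw [Submodule.map_comap_subtype]
    exact inf_eq_right.mpr inf_le_left
  have hCX : Cm ⊓ Xm = ⊥ := by
    rw [← hXmap, ← Submodule.map_inf _ hinj, disjoint_iff.mp hC₀.1.symm, Submodule.map_bot]
  have hCsup : Cm ⊔ Xm = Zm := by
    rw [← hXmap, ← Submodule.map_sup, sup_comm, codisjoint_iff.mp hC₀.2]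
    exact Submodule.map_subtype_top Zm
  have hCE : Cm ⊓ Em = ⊥ := by
    have h1 : Cm ⊓ Em ≤ Cm ⊓ Xm :=
      le_inf inf_le_left (le_inf (le_trans inf_le_left hCmZ) inf_le_right)
    rw [hCX] at h1
    exact le_bot_iff.mp h1
  have hCne : Cm ≠ ⊥ := by
    intro h
    have hZX : Zm = Xm := by rw [← hCsup, h, bot_sup_eq]
    apply hBE
    intro b hb
    have hbZ : b ∈ Zm := fun y => hBcent b hb y
    have hbX : b ∈ Xm := hZX ▸ hbZ
    exact (LieSubmodule.mem_toSubmodule _).mp hbX.2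
  -- C as a Lie ideal
  set CI : LieIdeal F Le.env :=
    { toSubmodule := Cm
      lie_mem := fun {x m} hm => by
        have hmz : m ∈ Zm := hCmZ hm
        have : ⁅x, m⁆ = 0 := by rw [← lie_skew, hmz x, neg_zero]
        show ⁅x, m⁆ ∈ Cm
        rw [this]; exact Cm.zero_mem } with hCI
  have memCI : ∀ z : Le.env, z ∈ CI ↔ z ∈ Cm := fun z => Iff.rfl
  -- the quotient
  let Q := Le.env ⧸ CI
  let πl : Le.env →ₗ[F] Q := (CI : Submodule F Le.env).mkQ
  have πl_bracket : ∀ x y : Le.env, πl ⁅x, y⁆ = ⁅(πl x : Q), πl y⁆ := fun x y =>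
    LieSubmodule.Quotient.mk_bracket CI x y
  let πh : Le.env →ₗ⁅F⁆ Q := { πl with map_lie' := by intro x y; exact πl_bracket x y }
  have πsurj : Function.Surjective πh := Submodule.Quotient.mk_surjective _
  obtain ⟨s, hs⟩ := πl.exists_rightInverse_of_surjective (Submodule.range_mkQ _)
  have hsq : ∀ q : Q, πh (s q) = q := fun q => congrArg (fun f => f q) (congrArg DFunLike.coe hs)
  have πh_apply : ∀ x, πh x = πl x := fun _ => rfl
  have πh_bracket : ∀ x y : Le.env, πh ⁅x, y⁆ = ⁅(πh x : Q), πh y⁆ := fun x y => πh.map_lie x y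
  have πh_add : ∀ x y : Le.env, πh (x + y) = πh x + πh y := fun x y => πl.map_add x y
  have πh_sub : ∀ x y : Le.env, πh (x - y) = πh x - πh y := fun x y => πl.map_sub x y
  have πker : ∀ x : Le.env, πh x = 0 → x ∈ Cm := by
    intro x hx
    have : x ∈ CI := by
      rw [← LieSubmodule.Quotient.mk_eq_zero]; exact hx
    exact this
  let pOpQ : Q → Q := fun q => πh (Le.pstruct.pOp (s q))
  -- ad facts
  have πpow : ∀ (x : Le.env) (n : ℕ) (y : Le.env),
      ((LieAlgebra.ad F Q (πh x)) ^ n) (πh y) = πh (((LieAlgebra.ad F Le.env x) ^ n) y) := by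
    intro x n
    induction n with
    | zero => intro y; simp
    | succ n ih =>
        intro y
        rw [pow_succ, pow_succ, Module.End.mul_apply, Module.End.mul_apply,
          LieAlgebra.ad_apply, LieAlgebra.ad_apply, ← πh_bracket, ih ⁅x, y⁆]
  have adP : ∀ (x : Le.env) (y : Le.env),
      ⁅Le.pstruct.pOp x, y⁆ = ((LieAlgebra.ad F Le.env x) ^ p) y := by
    intro x y
    rw [Le.pstruct.ad_pow]; rfl
  have hcentbr : ∀ c ∈ Cm, ∀ u : Le.env, ⁅c, u⁆ = 0 := fun c hc u => (hCmZ hc) u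
  have hsame : ∀ x : Le.env, LieAlgebra.ad F Le.env x = LieAlgebra.ad F Le.env (s (πh x)) := by
    intro x
    have hd : x - s (πh x) ∈ Cm := by
      apply πker
      rw [πh_sub, hsq]
      simp
    ext u
    have := hcentbr _ hd u
    rw [sub_lie, sub_eq_zero] at this
    simpa [LieAlgebra.ad_apply] using this
  have hPdiff : ∀ x : Le.env, Le.pstruct.pOp x - Le.pstruct.pOp (s (πh x)) ∈ Zm := by
    intro x
    intro y
    rw [sub_lie, adP, adP, hsame x, sub_self]
  -- the p-structure on Q
  have adQ_pow : ∀ q : Q, (LieAlgebra.ad F Q q) ^ p = LieAlgebra.ad F Q (pOpQ q) := by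
    intro q
    ext u
    obtain ⟨y, hy⟩ := πsurj u
    have h1 : ((LieAlgebra.ad F Q (πh (s q))) ^ p) (πh y)
        = πh (((LieAlgebra.ad F Le.env (s q)) ^ p) y) := πpow (s q) p y
    rw [hsq] at h1
    have h3 : ⁅Le.pstruct.pOp (s (πh (s q))), y⁆ = ((LieAlgebra.ad F Le.env (s q)) ^ p) y := by
      rw [adP (s (πh (s q))) y, ← hsame (s q)]
    have h2 : ⁅pOpQ q, (πh y : Q)⁆ = πh (((LieAlgebra.ad F Le.env (s q)) ^ p) y) := by
      show ⁅πh (Le.pstruct.pOp (s q)), (πh y : Q)⁆ = _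
      rw [← πh_bracket, adP]
    rw [← hy, LieAlgebra.ad_apply, h1, h2]
  have smulQ : ∀ (t : F) (q : Q), pOpQ (t • q) = t ^ p • pOpQ q := by
    intro t q
    show πh (Le.pstruct.pOp (s (t • q))) = t ^ p • πh (Le.pstruct.pOp (s q))
    rw [map_smul, Le.pstruct.smul_pow]
    exact πl.map_smul _ _
  have jacQ : ∀ q q' : Q,
      (UniversalEnvelopingAlgebra.ι F (q + q')) ^ p
          - UniversalEnvelopingAlgebra.ι F (pOpQ (q + q')) =
        ((UniversalEnvelopingAlgebra.ι F q) ^ p - UniversalEnvelopingAlgebra.ι F (pOpQ q)) +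
          ((UniversalEnvelopingAlgebra.ι F q') ^ p - UniversalEnvelopingAlgebra.ι F (pOpQ q')) := by
    intro q q'
    let Φ := UniversalEnvelopingAlgebra.lift F
      ((UniversalEnvelopingAlgebra.ι F).comp πh : Le.env →ₗ⁅F⁆ UniversalEnvelopingAlgebra F Q)
    have key : ∀ z : Le.env,
        Φ (UniversalEnvelopingAlgebra.ι F z) = UniversalEnvelopingAlgebra.ι F (πh z) := by
      intro z
      rw [UniversalEnvelopingAlgebra.lift_ι_apply]
      rfl
    have hJ := congrArg Φ (Le.pstruct.jacobson (s q) (s q'))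
    simp only [map_sub, map_add, map_pow, key] at hJ
    rw [hsq, hsq] at hJ
    have hsadd : s (q + q') = s q + s q' := map_add s q q'
    show (UniversalEnvelopingAlgebra.ι F (q + q')) ^ p
        - UniversalEnvelopingAlgebra.ι F (πh (Le.pstruct.pOp (s (q + q')))) = _
    rw [hsadd]
    simp only [map_add]
    exact hJ
  -- E' and the iso
  set E' : LieIdeal F Q :=
    { toSubmodule := Em.map πl
      lie_mem := by
        rintro x m hm
        obtain ⟨e, he, rfl⟩ := hm
        obtain ⟨y, rfl⟩ := πsurj x
        show ⁅(πh y : Q), πh e⁆ ∈ Em.map πl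
        rw [← πh_bracket]
        exact Submodule.mem_map_of_mem (Le.E.lie_mem he)
      } with hE'
  have memE' : ∀ q : Q, q ∈ E' ↔ ∃ e ∈ Em, πl e = q := fun q => Submodule.mem_map
  have hEinj : ∀ a b : Le.env, a ∈ Em → b ∈ Em → πh a = πh b → a = b := by
    intro a b ha hb hab
    have : a - b ∈ Cm := πker _ (by rw [πh_sub, hab, sub_self])
    have h2 : a - b ∈ Cm ⊓ Em := ⟨this, sub_mem ha hb⟩
    rw [hCE] at h2
    have := (Submodule.mem_bot F).mp h2
    exact sub_eq_zero.mp this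
  -- the equivalence between E and E'
  have hmemE'π : ∀ e : Le.env, e ∈ Le.E → πh e ∈ E' := fun e he => Submodule.mem_map_of_mem he
  let f : (↥Le.E) →ₗ⁅F⁆ ↥E' :=
    { toFun := fun e => ⟨πh ↑e, hmemE'π ↑e e.2⟩
      map_add' := fun a b => Subtype.ext (πl.map_add ↑a ↑b)
      map_smul' := fun t a => Subtype.ext (πl.map_smul t ↑a)
      map_lie' := fun {a b} => Subtype.ext (πh_bracket ↑a ↑b) }
  have hfbij : Function.Bijective f := by
    constructor
    · intro a b hab
      apply Subtype.ext
      exact hEinj ↑a ↑b a.2 b.2 (congrArg Subtype.val hab)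
    · rintro ⟨q, hq⟩
      obtain ⟨e, he, hpe⟩ := hq
      exact ⟨⟨e, he⟩, Subtype.ext hpe⟩
  let eqv : (↥Le.E) ≃ₗ⁅F⁆ ↥E' := LieEquiv.ofBijective f hfbij
  let isoQ : L ≃ₗ⁅F⁆ ↥E' := Le.iso.trans eqv
  -- generation
  have genQ : ∀ S : LieSubalgebra F Q, (E' : LieSubalgebra F Q) ≤ S →
      (∀ x ∈ S, pOpQ x ∈ S) → S = ⊤ := by
    intro S hES hPS
    have hmemcoe : ∀ q : Q, q ∈ E' → q ∈ S := by
      intro q hq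
      apply hES
      rw [← LieSubalgebra.mem_coe, LieIdeal.coe_toLieSubalgebra]
      exact hq
    set Spre : LieSubalgebra F Le.env :=
      { carrier := {x : Le.env | πh x ∈ S}
        add_mem' := fun {a b} ha hb => by
          show πh (a + b) ∈ S
          rw [πh_add]; exact S.add_mem ha hb
        zero_mem' := by
          show πh 0 ∈ S
          rw [show πh (0 : Le.env) = 0 from πl.map_zero]
          exact S.zero_mem
        smul_mem' := fun t a ha => by
          show πh (t • a) ∈ S
          rw [show πh (t • a) = t • πh a from πl.map_smul t a]
          exact S.smul_mem t ha
        lie_mem' := fun {a b} ha hb => by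
          show πh ⁅a, b⁆ ∈ S
          rw [πh_bracket]; exact S.lie_mem ha hb } with hSpre
    have hE1 : (Le.E : LieSubalgebra F Le.env) ≤ Spre := by
      intro e he
      show πh e ∈ S
      exact hmemcoe _ (Submodule.mem_map_of_mem he)
    have hP1 : ∀ x ∈ Spre, Le.pstruct.pOp x ∈ Spre := by
      intro x hx
      show πh (Le.pstruct.pOp x) ∈ S
      have hd := hPdiff x
      rw [← hCsup] at hd
      obtain ⟨c, hc, a, haX, hca⟩ := Submodule.mem_sup.mp hd
      have hx2 : Le.pstruct.pOp x = Le.pstruct.pOp (s (πh x)) + (c + a) := by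
        rw [hca]
        abel
      rw [hx2, πh_add, πh_add]
      apply S.add_mem
      · exact hPS _ hx
      · apply S.add_mem
        · have hc0 : πh c = 0 := (Submodule.Quotient.mk_eq_zero _).mpr hc
          rw [hc0]; exact S.zero_mem
        · exact hmemcoe _ (Submodule.mem_map_of_mem haX.2)
    have htop := Le.generates Spre hE1 hP1
    rw [eq_top_iff]
    intro q _
    have h1 : s q ∈ Spre := htop ▸ LieSubalgebra.mem_top (s q)
    have h2 : πh (s q) ∈ S := h1
    rwa [hsq] at h2
  -- assemble the smaller envelope
  let MQ : PEnvelope F L p :=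
    { env := Q
      finDim := inferInstance
      pstruct := ⟨pOpQ, adQ_pow, smulQ, jacQ⟩
      E := E'
      iso := isoQ
      generates := genQ }
  have hmin : Module.finrank F Le.env ≤ Module.finrank F Q := hminimal MQ
  have hqr : Module.finrank F Q + Module.finrank F Cm = Module.finrank F Le.env :=
    Submodule.finrank_quotient_add_finrank Cm
  have hCpos : 0 < Module.finrank F Cm := by
    have hnt : Nontrivial ↥Cm := Submodule.nontrivial_iff_ne_bot.mpr hCne
    exact Module.finrank_pos_iff.mpr hnt
  omega

set_option maxHeartbeats 1000000 in
theorem minimal_p_envelope_inherits_multiplicity_condition'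
    {F L : Type} [Field F] [IsAlgClosed F] [LieRing L] [LieAlgebra F L] {p : ℕ}
    [Fact p.Prime] [CharP F p] [FiniteDimensional F L]
    (hL : MultiplicityCondition F L)
    (Le : PEnvelope F L p)
    (hminimal : ∀ M : PEnvelope F L p, Module.finrank F Le.env ≤ Module.finrank F M.env) :
    (∀ B : LieIdeal F Le.env, IsAtom B → B ≤ Le.E) ∧
    MultiplicityCondition F Le.env := by
  classical
  have _i : FiniteDimensional F Le.env := Le.finDim
  have hpart1 : ∀ B : LieIdeal F Le.env, IsAtom B → B ≤ Le.E :=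
    fun B hB => part1 Le hminimal B hB
  refine ⟨hpart1, ?_⟩
  intro r hr A hatom habel hindep hiso
  set i0 : Fin r := ⟨0, hr⟩ with hi0
  -- the embedding of L into the envelope
  let g : L →ₗ[F] Le.env :=
    ((Le.E : Submodule F Le.env).subtype).comp Le.iso.toLinearEquiv.toLinearMap
  have hg : ∀ x : L, g x = ↑(Le.iso x) := fun x => rfl
  have hginj : Function.Injective g := by
    intro a b hab
    rw [hg, hg] at hab
    exact Le.iso.injective (Subtype.ext hab)
  have hgbr : ∀ x y : L, g ⁅x, y⁆ = ⁅g x, g y⁆ := by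
    intro x y
    rw [hg, hg, hg, Le.iso.map_lie]
    rfl
  have hrange : ∀ x : L, g x ∈ Le.E := fun x => (Le.iso x).2
  have hgsymm : ∀ (e : Le.env) (he : e ∈ Le.E), g (Le.iso.symm ⟨e, he⟩) = e := by
    intro e he
    rw [hg, Le.iso.apply_symm_apply]
  have hsurjE : ∀ e : Le.env, e ∈ Le.E → ∃ x : L, g x = e := fun e he =>
    ⟨Le.iso.symm ⟨e, he⟩, hgsymm e he⟩
  -- the pulled-back ideals
  let A' : Fin r → LieIdeal F L := fun i =>
    { toSubmodule := (A i : Submodule F Le.env).comap g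
      lie_mem := fun {x m} hm => by
        show g ⁅x, m⁆ ∈ (A i : Submodule F Le.env)
        rw [hgbr]
        exact (A i).lie_mem hm }
  have memA' : ∀ (i) (x : L), x ∈ A' i ↔ g x ∈ A i := fun i x => Iff.rfl
  have hAE : ∀ i, A i ≤ Le.E := fun i => hpart1 (A i) (hatom i)
  -- minimality transfers
  have key : ∀ (J : LieIdeal F L) (i), J ≤ A' i → J ≠ ⊥ → A' i ≤ J := by
    intro J i hJA hJne
    set Jm : Submodule F Le.env := (J : Submodule F L).map g with hJm
    have hJmE : ∀ e ∈ Le.E, ∀ j ∈ Jm, ⁅e, j⁆ ∈ Jm := by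
      intro e he j hj
      obtain ⟨jL, hjL, rfl⟩ := hj
      obtain ⟨eL, rfl⟩ := hsurjE e he
      rw [← hgbr]
      exact Submodule.mem_map_of_mem (J.lie_mem hjL)
    have hstab := stab Le Jm hJmE
    set Jid : LieIdeal F Le.env :=
      { toSubmodule := Jm
        lie_mem := fun {x m} hm => hstab x m hm } with hJid
    have hJA' : Jid ≤ A i := by
      rintro _ ⟨jL, hjL, rfl⟩
      exact hJA hjL
    have hJne' : Jid ≠ ⊥ := by
      intro h
      apply hJne
      rw [LieSubmodule.eq_bot_iff] at h ⊢
      intro m hm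
      have h0 : g m = 0 := h (g m) (Submodule.mem_map_of_mem hm)
      exact hginj (by rw [h0, g.map_zero])
    have hJeq : Jid = A i := by
      by_contra hne
      exact hJne' ((hatom i).2 _ (lt_of_le_of_ne hJA' hne))
    intro x hx
    have hgx : g x ∈ Jm := by
      have : g x ∈ A i := hx
      rw [← hJeq] at this
      exact this
    obtain ⟨jL, hjL, hj⟩ := hgx
    rwa [← hginj hj]
  have hA'atom : ∀ i, IsAtom (A' i) := by
    intro i
    constructor
    · intro h
      apply (hatom i).1
      rw [LieSubmodule.eq_bot_iff]
      intro m hm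
      obtain ⟨x, hx⟩ := hsurjE m (hAE i hm)
      have hxA : x ∈ A' i := by rw [memA', hx]; exact hm
      rw [h] at hxA
      have hx0 : x = 0 := by simpa using hxA
      rw [← hx, hx0, g.map_zero]
    · intro J hJ
      by_contra hJne
      exact hJ.ne (le_antisymm hJ.le (key J i hJ.le hJne))
  have hA'abel : ∀ i, ∀ a ∈ A' i, ∀ b ∈ A' i, ⁅a, b⁆ = (0 : L) := by
    intro i a ha b hb
    apply hginj
    rw [hgbr, g.map_zero]
    exact habel i _ ha _ hb
  have hA'indep : iSupIndep A' := by
    intro i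
    rw [disjoint_iff_inf_le]
    intro x hx
    obtain ⟨hx1, hx2⟩ := (LieSubmodule.mem_inf _ _ _).mp hx
    set T : LieIdeal F L :=
      { toSubmodule := ((⨆ j, ⨆ _ : j ≠ i, A j : LieIdeal F Le.env) :
            Submodule F Le.env).comap g
        lie_mem := fun {y m} hm => by
          show g ⁅y, m⁆ ∈ ((⨆ j, ⨆ _ : j ≠ i, A j : LieIdeal F Le.env) : Submodule F Le.env)
          rw [hgbr]
          exact (⨆ j, ⨆ _ : j ≠ i, A j : LieIdeal F Le.env).lie_mem hm } with hT
    have hle : (⨆ j, ⨆ _ : j ≠ i, A' j) ≤ T := by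
      refine iSup_le fun j => iSup_le fun hj => ?_
      intro y hy
      have h1 : g y ∈ A j := hy
      have h2 : (A j : LieIdeal F Le.env) ≤ ⨆ j, ⨆ _ : j ≠ i, A j := le_iSup₂ (f := fun (j : Fin r) (_ : j ≠ i) => A j) j hj
      exact h2 h1
    have hx2T : g x ∈ (⨆ j, ⨆ _ : j ≠ i, A j : LieIdeal F Le.env) := hle hx2
    have hgx : g x ∈ (A i) ⊓ (⨆ j, ⨆ _ : j ≠ i, A j) :=
      (LieSubmodule.mem_inf _ _ _).mpr ⟨hx1, hx2T⟩
    have hbot : g x ∈ (⊥ : LieIdeal F Le.env) := disjoint_iff_inf_le.mp (hindep i) hgx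
    have hg0 : g x = 0 := by simpa using hbot
    have hx0 : x = 0 := hginj (by rw [hg0, g.map_zero])
    simpa [hx0] using LieSubmodule.zero_mem (⊥ : LieIdeal F L)
  -- subtype transfer maps
  let toA : ∀ i, ↥(A' i) → ↥(A i) := fun i x => ⟨g ↑x, x.2⟩
  let fromA : ∀ i, ↥(A i) → ↥(A' i) := fun i u =>
    ⟨Le.iso.symm ⟨↑u, hAE i u.2⟩, by
      show g _ ∈ (A i : Submodule F Le.env)
      rw [hgsymm]
      exact u.2⟩
  have gfrom : ∀ (i) (u : ↥(A i)), g ↑(fromA i u) = ↑u := fun i u => hgsymm _ _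
  have toA_fromA : ∀ (i) (u : ↥(A i)), toA i (fromA i u) = u := fun i u =>
    Subtype.ext (gfrom i u)
  have fromA_toA : ∀ (i) (x : ↥(A' i)), fromA i (toA i x) = x := fun i x =>
    Subtype.ext (hginj (by rw [gfrom]))
  have toA_add : ∀ (i) (a b : ↥(A' i)), toA i (a + b) = toA i a + toA i b :=
    fun i a b => Subtype.ext (g.map_add ↑a ↑b)
  have toA_smul : ∀ (i) (t : F) (a : ↥(A' i)), toA i (t • a) = t • toA i a :=
    fun i t a => Subtype.ext (g.map_smul t ↑a)
  -- the module isomorphisms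
  have hiso' : ∀ i, Nonempty (↥(A' i0) ≃ₗ⁅F,L⁆ ↥(A' i)) := by
    intro i
    obtain ⟨e⟩ := hiso i
    have e_add : ∀ x y, e (x + y) = e x + e y := fun x y => by
      have h := (e : ↥(A i0) →ₗ⁅F,Le.env⁆ ↥(A i)).map_add x y
      exact h
    have e_smul : ∀ (t : F) (x), e (t • x) = t • e x := fun t x => by
      have h := (e : ↥(A i0) →ₗ⁅F,Le.env⁆ ↥(A i)).map_smul t x
      exact h
    have e_lie : ∀ (v : Le.env) (m), e ⁅v, m⁆ = ⁅v, e m⁆ := fun v m => by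
      have h := (e : ↥(A i0) →ₗ⁅F,Le.env⁆ ↥(A i)).map_lie v m
      rwa [LieModuleEquiv.coe_toLieModuleHom] at h
    refine ⟨{ toFun := fun x => fromA i (e (toA i0 x))
              map_add' := ?_
              map_smul' := ?_
              map_lie' := ?_
              invFun := fun u => fromA i0 (e.symm (toA i u))
              left_inv := ?_
              right_inv := ?_ }⟩
    · intro a b
      apply Subtype.ext
      apply hginj
      show g ↑(fromA i (e (toA i0 (a + b))))
          = g ↑(fromA i (e (toA i0 a)) + fromA i (e (toA i0 b)))
      rw [LieSubmodule.coe_add, g.map_add, gfrom, gfrom, gfrom, toA_add, e_add,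
        LieSubmodule.coe_add]
    · intro t a
      apply Subtype.ext
      apply hginj
      show g ↑(fromA i (e (toA i0 (t • a)))) = g ↑(t • fromA i (e (toA i0 a)))
      rw [LieSubmodule.coe_smul, g.map_smul, gfrom, gfrom, toA_smul, e_smul,
        LieSubmodule.coe_smul]
    · intro y m
      apply Subtype.ext
      apply hginj
      show g ↑(fromA i (e (toA i0 ⁅y, m⁆))) = g ↑(⁅y, fromA i (e (toA i0 m))⁆ : ↥(A' i))
      rw [gfrom]
      have h1 : toA i0 ⁅y, m⁆ = ⁅g y, toA i0 m⁆ := by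
        apply Subtype.ext
        show g ↑(⁅y, m⁆ : ↥(A' i0)) = ↑(⁅g y, toA i0 m⁆ : ↥(A i0))
        rw [LieSubmodule.coe_bracket, LieSubmodule.coe_bracket, hgbr]
      rw [h1, e_lie]
      rw [LieSubmodule.coe_bracket, LieSubmodule.coe_bracket, hgbr]
      rw [gfrom]
    · intro x
      show fromA i0 (e.symm (toA i (fromA i (e (toA i0 x))))) = x
      rw [toA_fromA, e.symm_apply_apply, fromA_toA]
    · intro u
      show fromA i (e (toA i0 (fromA i0 (e.symm (toA i u))))) = u
      rw [toA_fromA, e.apply_symm_apply, fromA_toA]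
  have hmain := hL r hr A' hA'atom hA'abel hA'indep hiso'
  -- identification of dimensions
  have hfr : Module.finrank F ↥(A' i0) = Module.finrank F ↥(A i0) := by
    have hbij : Function.Bijective
        ({ toFun := toA i0
           map_add' := toA_add i0
           map_smul' := toA_smul i0 } : ↥(A' i0) →ₗ[F] ↥(A i0)) := by
      constructor
      · intro a b hab
        have h2 : (g ↑a : Le.env) = g ↑b := by
          have h3 := congrArg (Subtype.val (p := fun z => z ∈ A i0)) hab
          exact h3
        exact Subtype.ext (hginj h2)
      · intro u
        exact ⟨fromA i0 u, toA_fromA i0 u⟩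
    exact (LinearEquiv.ofBijective _ hbij).finrank_eq
  rw [← hfr]
  exact hmain

end Aux

/-- Let `L` be a finite-dimensional Lie algebra over an algebraically
closed field of characteristic `p ≠ 0` satisfying the multiplicity condition, and let
`Lᵉ` be a minimal `p`-envelope of `L`.  Then every minimal ideal of `Lᵉ` is contained in
(the copy of) `L`, and `Lᵉ` satisfies the multiplicity condition as well. -/
theorem minimal_p_envelope_inherits_multiplicity_condition
    {F L : Type} [Field F] [IsAlgClosed F] [LieRing L] [LieAlgebra F L] {p : ℕ}
    [Fact p.Prime] [CharP F p] [FiniteDimensional F L]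
    (hL : MultiplicityCondition F L)
    (Le : PEnvelope F L p)
    (hminimal : ∀ M : PEnvelope F L p, Module.finrank F Le.env ≤ Module.finrank F M.env) :
    (∀ B : LieIdeal F Le.env, IsAtom B → B ≤ Le.E) ∧
    MultiplicityCondition F Le.env :=
  minimal_p_envelope_inherits_multiplicity_condition' hL Le hminimal
end
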